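/- arXiv:2310.17387 — 3 statements merged into one kernel-verified Lean document; each statement's English description precedes it below -/
import Mathlib

section
/- Let a, b > 0 be real numbers and let f : ℝ → [0,∞] be a measurable function. Then the iterated lower Lebesgue integral ∫_{t∈(0,∞)} ∫_{τ∈(0,∞)} t^{a−1} · τ^{b−1} · f(t+τ) dτ dt equals (Γ(a)Γ(b)/Γ(a+b)) · ∫_{s∈(0,∞)} s^{a+b−1} · f(s) ds, where Γ is the real Gamma function. -/
open MeasureTheory Set ENNReal intervalIntegral

lemma cpow_ofReal_aux {x c : ℝ} (hx : 0 ≤ x) :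
    (x : ℂ) ^ ((c : ℂ) - 1) = ((x ^ (c - 1) : ℝ) : ℂ) := by
  rw [Complex.ofReal_cpow hx]; push_cast; ring_nf

lemma real_beta_integrable {a b : ℝ} (ha : 0 < a) (hb : 0 < b) :
    IntervalIntegrable (fun x : ℝ => x ^ (a - 1) * (1 - x) ^ (b - 1)) volume 0 1 := by
  have h := (Complex.betaIntegral_convergent (u := a) (v := b) (by simpa) (by simpa)).norm
  apply h.congr
  intro x hx
  rw [uIoc_of_le (by norm_num : (0:ℝ) ≤ 1)] at hx
  have hx0 : (0:ℝ) ≤ x := hx.1.le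
  have hx1 : (0:ℝ) ≤ 1 - x := by linarith [hx.2]
  have e1 := cpow_ofReal_aux (c := a) hx0
  have e2 := cpow_ofReal_aux (c := b) hx1
  push_cast at e1 e2 ⊢
  rw [e1, e2, ← Complex.ofReal_mul, Complex.norm_real]
  exact Real.norm_of_nonneg (by positivity)

lemma real_beta_integral {a b : ℝ} (ha : 0 < a) (hb : 0 < b) :
    ∫ x in (0:ℝ)..1, x ^ (a - 1) * (1 - x) ^ (b - 1)
      = Real.Gamma a * Real.Gamma b / Real.Gamma (a + b) := by
  have key : Complex.betaIntegral a b
      = ((∫ x in (0:ℝ)..1, x ^ (a - 1) * (1 - x) ^ (b - 1) : ℝ) : ℂ) := by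
    rw [Complex.betaIntegral, ← intervalIntegral.integral_ofReal]
    apply intervalIntegral.integral_congr
    intro x hx
    rw [uIcc_of_le (by norm_num : (0:ℝ) ≤ 1)] at hx
    have e1 := cpow_ofReal_aux (c := a) hx.1
    have e2 := cpow_ofReal_aux (c := b) (by linarith [hx.2] : (0:ℝ) ≤ 1 - x)
    push_cast at e1 e2 ⊢
    rw [e1, e2, ← Complex.ofReal_mul]
  have hG := Complex.Gamma_mul_Gamma_eq_betaIntegral
    (s := (a:ℂ)) (t := (b:ℂ)) (by simpa) (by simpa)
  rw [key, ← Complex.ofReal_add, Complex.Gamma_ofReal, Complex.Gamma_ofReal,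
    Complex.Gamma_ofReal, ← Complex.ofReal_mul, ← Complex.ofReal_mul] at hG
  have hG' := Complex.ofReal_injective hG
  have hpos : 0 < Real.Gamma (a + b) := Real.Gamma_pos_of_pos (by linarith)
  field_simp
  linarith [hG']

lemma scaled_beta_integral {a b : ℝ} (ha : 0 < a) (hb : 0 < b) {s : ℝ} (hs : 0 < s) :
    ∫ t in (0:ℝ)..s, t ^ (a - 1) * (s - t) ^ (b - 1)
      = s ^ (a + b - 1) * (Real.Gamma a * Real.Gamma b / Real.Gamma (a + b)) := by
  have h := intervalIntegral.smul_integral_comp_mul_left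
    (fun t : ℝ => t ^ (a - 1) * (s - t) ^ (b - 1)) (a := 0) (b := 1) s
  rw [mul_zero, mul_one] at h
  rw [← h]
  have congr1 : ∫ x in (0:ℝ)..1, (s * x) ^ (a - 1) * (s - s * x) ^ (b - 1)
      = ∫ x in (0:ℝ)..1, (s ^ (a - 1) * s ^ (b - 1)) * (x ^ (a - 1) * (1 - x) ^ (b - 1)) := by
    apply intervalIntegral.integral_congr
    intro x hx
    rw [uIcc_of_le (by norm_num : (0:ℝ) ≤ 1)] at hx
    have h1 : s - s * x = s * (1 - x) := by ring
    dsimp only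
    rw [h1, Real.mul_rpow hs.le hx.1, Real.mul_rpow hs.le (by linarith [hx.2])]
    ring
  rw [congr1, intervalIntegral.integral_const_mul, real_beta_integral ha hb, smul_eq_mul]
  have : s * (s ^ (a - 1) * s ^ (b - 1)) = s ^ (a + b - 1) := by
    nth_rewrite 1 [← Real.rpow_one s]
    rw [← Real.rpow_add hs, ← Real.rpow_add hs]
    ring_nf
  rw [← mul_assoc, ← this]

lemma scaled_beta_integrable {a b : ℝ} (ha : 0 < a) (hb : 0 < b) {s : ℝ} (hs : 0 < s) :
    IntervalIntegrable (fun t : ℝ => t ^ (a - 1) * (s - t) ^ (b - 1)) volume 0 s := by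
  have h0 := ((real_beta_integrable ha hb).comp_mul_left (c := s⁻¹) enorm_ne_top enorm_ne_top).const_mul
    (s ^ (a - 1) * s ^ (b - 1))
  rw [zero_div, one_div, inv_inv] at h0
  apply h0.congr
  intro t ht
  dsimp only
  rw [uIoc_of_le hs.le] at ht
  have hts : (0:ℝ) ≤ 1 - s⁻¹ * t := by
    rw [sub_nonneg, inv_mul_le_iff₀ hs, mul_one]; exact ht.2
  have e1 : (s⁻¹ * t) ^ (a - 1) = s⁻¹ ^ (a - 1) * t ^ (a - 1) :=
    Real.mul_rpow (by positivity) ht.1.le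
  have e2 : (1 - s⁻¹ * t) ^ (b - 1) = s⁻¹ ^ (b - 1) * (s - t) ^ (b - 1) := by
    have : 1 - s⁻¹ * t = s⁻¹ * (s - t) := by field_simp
    rw [this, Real.mul_rpow (by positivity) (by linarith [ht.2])]
  rw [e1, e2]
  rw [Real.inv_rpow hs.le, Real.inv_rpow hs.le]
  field_simp

lemma lintegral_beta_scaled {a b : ℝ} (ha : 0 < a) (hb : 0 < b) {s : ℝ} (hs : 0 < s) :
    ∫⁻ t in Ioo (0:ℝ) s, ENNReal.ofReal (t ^ (a - 1)) * ENNReal.ofReal ((s - t) ^ (b - 1))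
      = ENNReal.ofReal (Real.Gamma a * Real.Gamma b / Real.Gamma (a + b))
        * ENNReal.ofReal (s ^ (a + b - 1)) := by
  have step1 : ∫⁻ t in Ioo (0:ℝ) s,
      ENNReal.ofReal (t ^ (a - 1)) * ENNReal.ofReal ((s - t) ^ (b - 1))
      = ∫⁻ t in Ioo (0:ℝ) s, ENNReal.ofReal (t ^ (a - 1) * (s - t) ^ (b - 1)) := by
    apply setLIntegral_congr_fun measurableSet_Ioo
    intro t ht
    dsimp only
    rw [ENNReal.ofReal_mul (Real.rpow_nonneg ht.1.le _)]
  rw [step1]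
  have hint : IntegrableOn (fun t : ℝ => t ^ (a - 1) * (s - t) ^ (b - 1)) (Ioo 0 s) volume :=
    (intervalIntegrable_iff_integrableOn_Ioo_of_le hs.le).mp (scaled_beta_integrable ha hb hs)
  rw [← ofReal_integral_eq_lintegral_ofReal hint ?_]
  · rw [show (∫ t in Ioo (0:ℝ) s, t ^ (a - 1) * (s - t) ^ (b - 1))
        = ∫ t in (0:ℝ)..s, t ^ (a - 1) * (s - t) ^ (b - 1) by
      rw [intervalIntegral.integral_of_le hs.le, integral_Ioc_eq_integral_Ioo]]
    rw [scaled_beta_integral ha hb hs,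
      ENNReal.ofReal_mul (by positivity), mul_comm]
  · filter_upwards [ae_restrict_mem measurableSet_Ioo] with t ht
    have := ht.1.le
    have : (0:ℝ) ≤ s - t := by linarith [ht.2]
    positivity

theorem beta_convolution_lintegral (a b : ℝ) (ha : 0 < a) (hb : 0 < b)
    (f : ℝ → ENNReal) (hf : Measurable f) :
    ∫⁻ t in Ioi (0 : ℝ), ∫⁻ τ in Ioi (0 : ℝ),
        ENNReal.ofReal (t ^ (a - 1)) * ENNReal.ofReal (τ ^ (b - 1)) * f (t + τ)
      = ENNReal.ofReal (Real.Gamma a * Real.Gamma b / Real.Gamma (a + b)) *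
          ∫⁻ s in Ioi (0 : ℝ), ENNReal.ofReal (s ^ (a + b - 1)) * f s := by
  set K : ℝ × ℝ → ℝ≥0∞ := fun p =>
    ENNReal.ofReal (p.1 ^ (a - 1)) * ENNReal.ofReal ((p.2 - p.1) ^ (b - 1)) * f p.2 with hK
  set S : Set (ℝ × ℝ) := {p | 0 < p.1 ∧ p.1 < p.2} with hSdef
  have hS : MeasurableSet S :=
    (measurableSet_lt measurable_const measurable_fst).inter
      (measurableSet_lt measurable_fst measurable_snd)
  have hKmeas : Measurable K := by
    apply Measurable.mul
    apply Measurable.fun_mul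
    · exact (measurable_fst.pow_const _).ennreal_ofReal
    · exact ((measurable_snd.sub measurable_fst).pow_const _).ennreal_ofReal
    · exact hf.comp measurable_snd
  -- Step 1: rewrite LHS as double lintegral over all of ℝ of the indicator
  have step1 : ∫⁻ t in Ioi (0 : ℝ), ∫⁻ τ in Ioi (0 : ℝ),
        ENNReal.ofReal (t ^ (a - 1)) * ENNReal.ofReal (τ ^ (b - 1)) * f (t + τ)
      = ∫⁻ t, ∫⁻ s, S.indicator K (t, s) := by
    rw [← lintegral_indicator measurableSet_Ioi]
    congr 1
    funext t
    by_cases ht : 0 < t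
    · rw [indicator_of_mem (by simpa using ht)]
      have hemb : MeasurableEmbedding (fun x : ℝ => t + x) :=
        (MeasurableEquiv.addLeft t).measurableEmbedding
      have hmp : MeasurePreserving (fun x : ℝ => t + x) volume volume :=
        measurePreserving_add_left volume t
      have hpre : (fun x : ℝ => t + x) ⁻¹' Ioi t = Ioi 0 := by
        ext x; simp
      have htr := hmp.setLIntegral_comp_preimage_emb hemb (fun s => K (t, s)) (Ioi t)
      rw [hpre] at htr
      have : ∫⁻ τ in Ioi (0 : ℝ),
          ENNReal.ofReal (t ^ (a - 1)) * ENNReal.ofReal (τ ^ (b - 1)) * f (t + τ)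
          = ∫⁻ τ in Ioi (0 : ℝ), K (t, t + τ) := by
        apply setLIntegral_congr_fun measurableSet_Ioi
        intro τ hτ
        simp [hK, add_sub_cancel_left]
      rw [this, htr, ← lintegral_indicator measurableSet_Ioi]
      congr 1
      funext s
      by_cases hst : t < s
      · rw [indicator_of_mem (by simpa using hst), indicator_of_mem (by exact ⟨ht, hst⟩)]
      · rw [indicator_of_notMem (by simpa using hst),
          indicator_of_notMem (fun (h : (t, s) ∈ S) => hst h.2)]
    · rw [indicator_of_notMem (by simpa using ht)]
      have hz : ∀ s : ℝ, S.indicator K (t, s) = 0 := fun s =>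
        indicator_of_notMem (fun (h : (t, s) ∈ S) => ht h.1) _
      simp only [hz, lintegral_zero]
  -- Step 2: Tonelli swap
  have step2 : ∫⁻ t, ∫⁻ s, S.indicator K (t, s)
      = ∫⁻ s, ∫⁻ t, S.indicator K (t, s) :=
    lintegral_lintegral_swap ((hKmeas.indicator hS).aemeasurable)
  -- Step 3: compute the inner integral
  have step3 : ∫⁻ s, ∫⁻ t, S.indicator K (t, s)
      = ENNReal.ofReal (Real.Gamma a * Real.Gamma b / Real.Gamma (a + b)) *
          ∫⁻ s in Ioi (0 : ℝ), ENNReal.ofReal (s ^ (a + b - 1)) * f s := by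
    have hptwise : ∀ s : ℝ, (∫⁻ t, S.indicator K (t, s))
        = (Ioi (0:ℝ)).indicator (fun s =>
            ENNReal.ofReal (Real.Gamma a * Real.Gamma b / Real.Gamma (a + b)) *
              (ENNReal.ofReal (s ^ (a + b - 1)) * f s)) s := by
      intro s
      by_cases hs : 0 < s
      · rw [indicator_of_mem (by simpa using hs)]
        have e1 : ∀ t : ℝ, S.indicator K (t, s) = (Ioo (0:ℝ) s).indicator
            (fun t => (ENNReal.ofReal (t ^ (a - 1)) *
              ENNReal.ofReal ((s - t) ^ (b - 1))) * f s) t := by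
          intro t
          rw [indicator_apply, indicator_apply]
          have hmem : ((t, s) ∈ S) = (t ∈ Ioo (0:ℝ) s) := by
            simp [hSdef, mem_Ioo]
          exact if_congr (iff_of_eq hmem) rfl rfl
        simp only [e1]
        rw [lintegral_indicator measurableSet_Ioo]
        rw [lintegral_mul_const _ (((measurable_id'.pow_const _).ennreal_ofReal).fun_mul
          (((measurable_const.fun_sub measurable_id').pow_const _).ennreal_ofReal))]
        rw [lintegral_beta_scaled ha hb hs, mul_assoc]
      · rw [indicator_of_notMem (by simpa using hs)]
        have hz : ∀ t : ℝ, S.indicator K (t, s) = 0 := fun t =>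
          indicator_of_notMem (fun (h : (t, s) ∈ S) => hs (lt_trans h.1 h.2)) _
        simp only [hz, lintegral_zero]
    simp only [hptwise]
    rw [lintegral_indicator measurableSet_Ioi,
      lintegral_const_mul _ (((measurable_id'.pow_const _).ennreal_ofReal).fun_mul hf)]
  rw [step1, step2, step3]
end

section
/- Let G be a group equipped with a measurable-space structure for which multiplication and inversion are measurable, let μ be an s-finite measure on G, and let h : ℝ × G → [0,∞] be a measurable function satisfying the Chapman–Kolmogorov property: for all t, τ > 0 and all x ∈ G, ∫_G h(t,y)·h(τ, y⁻¹x) dμ(y) = h(t+τ, x). Then for all real a, b > 0 and every x ∈ G, ∫_G (∫_{t∈(0,∞)} t^{a−1} h(t,y) dt) · (∫_{τ∈(0,∞)} τ^{b−1} h(τ, y⁻¹x) dτ) dμ(y) = (Γ(a)Γ(b)/Γ(a+b)) · ∫_{s∈(0,∞)} s^{a+b−1} h(s,x) ds. -/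
open MeasureTheory Set

namespace RieszAux

lemma beta_real {a b : ℝ} (ha : 0 < a) (hb : 0 < b) {s : ℝ} (hs : 0 < s) :
    ∫ t in (0:ℝ)..s, t ^ (a - 1) * (s - t) ^ (b - 1)
      = Real.Gamma a * Real.Gamma b / Real.Gamma (a + b) * s ^ (a + b - 1) := by
  have hΓ : ((Real.Gamma (a + b) : ℂ)) ≠ 0 := by
    exact_mod_cast (Real.Gamma_pos_of_pos (by linarith : (0:ℝ) < a + b)).ne'
  have h1 := Complex.Gamma_mul_Gamma_eq_betaIntegral (s := (a:ℂ)) (t := (b:ℂ))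
    (by simpa using ha) (by simpa using hb)
  rw [← Complex.ofReal_add, Complex.Gamma_ofReal, Complex.Gamma_ofReal,
    Complex.Gamma_ofReal] at h1
  have hB : Complex.betaIntegral a b
      = ((Real.Gamma a * Real.Gamma b / Real.Gamma (a + b) : ℝ) : ℂ) := by
    push_cast
    rw [eq_div_iff hΓ]
    linear_combination -h1
  have h2 := Complex.betaIntegral_scaled (a:ℂ) (b:ℂ) hs
  have hL : (∫ x in (0:ℝ)..s, (x:ℂ) ^ ((a:ℂ) - 1) * ((s:ℂ) - x) ^ ((b:ℂ) - 1))
      = ((∫ t in (0:ℝ)..s, t ^ (a - 1) * (s - t) ^ (b - 1) : ℝ) : ℂ) := by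
    rw [← intervalIntegral.integral_ofReal]
    refine intervalIntegral.integral_congr fun t ht => ?_
    rw [uIcc_of_le hs.le] at ht
    rw [Complex.ofReal_mul, Complex.ofReal_cpow ht.1,
      Complex.ofReal_cpow (sub_nonneg.2 ht.2)]
    push_cast
    ring
  have hR : ((s:ℂ)) ^ ((a:ℂ) + (b:ℂ) - 1) = ((s ^ (a + b - 1) : ℝ) : ℂ) := by
    rw [Complex.ofReal_cpow hs.le]
    push_cast
    ring_nf
  rw [hL, hB, hR, ← Complex.ofReal_mul] at h2
  have h3 := Complex.ofReal_injective h2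
  rw [h3]; ring

lemma beta_integrable {a b : ℝ} (ha : 0 < a) (hb : 0 < b) {s : ℝ} (hs : 0 < s) :
    IntervalIntegrable (fun t => t ^ (a - 1) * (s - t) ^ (b - 1)) volume 0 s := by
  have h1 : IntervalIntegrable (fun t => t ^ (a - 1) * (s - t) ^ (b - 1)) volume 0 (s/2) := by
    refine (intervalIntegral.intervalIntegrable_rpow' (by linarith)).mul_continuousOn ?_
    refine ContinuousOn.rpow_const (continuous_const.sub continuous_id).continuousOn ?_
    intro t ht
    rw [uIcc_of_le (by linarith)] at ht
    left
    have := ht.2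
    intro hc
    nlinarith
  have h2 : IntervalIntegrable (fun t => t ^ (a - 1) * (s - t) ^ (b - 1)) volume (s/2) s := by
    have hbase : IntervalIntegrable (fun t : ℝ => t ^ (b - 1)) volume 0 (s/2) :=
      intervalIntegral.intervalIntegrable_rpow' (by linarith)
    have h2' : IntervalIntegrable (fun t : ℝ => (s - t) ^ (b - 1)) volume (s/2) s := by
      have := (hbase.comp_sub_left s).symm
      simpa [sub_half] using this
    refine h2'.continuousOn_mul ?_
    refine ContinuousOn.rpow_const continuousOn_id ?_
    intro t ht
    rw [uIcc_of_le (by linarith)] at ht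
    left
    have := ht.1
    intro hc
    nlinarith
  exact h1.trans h2

lemma beta_lintegral {a b : ℝ} (ha : 0 < a) (hb : 0 < b) {s : ℝ} (hs : 0 < s) :
    ∫⁻ t in Ioo (0:ℝ) s, ENNReal.ofReal (t ^ (a - 1) * (s - t) ^ (b - 1))
      = ENNReal.ofReal (Real.Gamma a * Real.Gamma b / Real.Gamma (a + b))
        * ENNReal.ofReal (s ^ (a + b - 1)) := by
  rw [Measure.restrict_congr_set Ioo_ae_eq_Ioc]
  have hint : IntegrableOn (fun t => t ^ (a - 1) * (s - t) ^ (b - 1)) (Ioc 0 s) volume :=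
    (intervalIntegrable_iff_integrableOn_Ioc_of_le hs.le).mp (beta_integrable ha hb hs)
  have hnn : 0 ≤ᵐ[volume.restrict (Ioc 0 s)]
      fun t => t ^ (a - 1) * (s - t) ^ (b - 1) := by
    filter_upwards [ae_restrict_mem measurableSet_Ioc] with t ht
    exact mul_nonneg (Real.rpow_nonneg ht.1.le _)
      (Real.rpow_nonneg (by linarith [ht.2]) _)
  rw [← ofReal_integral_eq_lintegral_ofReal hint hnn,
    ← intervalIntegral.integral_of_le hs.le, beta_real ha hb hs,
    ENNReal.ofReal_mul (by positivity)]

lemma shift_lintegral (f : ℝ → ENNReal) (t : ℝ) :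
    ∫⁻ τ in Ioi (0:ℝ), f (τ + t) = ∫⁻ s in Ioi t, f s := by
  have h := (measurePreserving_add_right volume t).setLIntegral_comp_emb
    (measurableEmbedding_addRight t) f (Ioi 0)
  rw [h, image_add_const_Ioi, zero_add]

lemma swap_triangle (F : ℝ → ℝ → ENNReal) (hF : Measurable (Function.uncurry F)) :
    ∫⁻ t in Ioi (0:ℝ), ∫⁻ s in Ioi t, F t s
      = ∫⁻ s in Ioi (0:ℝ), ∫⁻ t in Ioo 0 s, F t s := by
  set A : Set (ℝ × ℝ) := {p | 0 < p.1 ∧ p.1 < p.2} with hA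
  have hAm : MeasurableSet A :=
    (measurableSet_lt measurable_const measurable_fst).inter
      (measurableSet_lt measurable_fst measurable_snd)
  have key1 : ∫⁻ t in Ioi (0:ℝ), ∫⁻ s in Ioi t, F t s
      = ∫⁻ t : ℝ, ∫⁻ s : ℝ, A.indicator (Function.uncurry F) (t, s) := by
    rw [← lintegral_indicator measurableSet_Ioi]
    refine lintegral_congr fun t => ?_
    by_cases ht : 0 < t
    · rw [indicator_of_mem (mem_Ioi.2 ht), ← lintegral_indicator measurableSet_Ioi]
      refine lintegral_congr fun s => ?_
      by_cases hst : t < s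
      · rw [indicator_of_mem (mem_Ioi.2 hst), indicator_of_mem (by exact ⟨ht, hst⟩)]
        rfl
      · rw [indicator_of_notMem (s := Ioi t) (fun hc => hst hc),
          indicator_of_notMem (by simp [hA, hst])]
    · rw [indicator_of_notMem (s := Ioi (0:ℝ)) (fun hc => ht hc)]
      have hz : ∀ s : ℝ, A.indicator (Function.uncurry F) (t, s) = 0 :=
        fun s => indicator_of_notMem (fun hc => ht hc.1) _
      rw [lintegral_congr hz, lintegral_zero]
  have key2 : ∫⁻ s in Ioi (0:ℝ), ∫⁻ t in Ioo 0 s, F t s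
      = ∫⁻ s : ℝ, ∫⁻ t : ℝ, A.indicator (Function.uncurry F) (t, s) := by
    rw [← lintegral_indicator measurableSet_Ioi]
    refine lintegral_congr fun s => ?_
    by_cases hsp : 0 < s
    · rw [indicator_of_mem (mem_Ioi.2 hsp), ← lintegral_indicator measurableSet_Ioo]
      refine lintegral_congr fun t => ?_
      by_cases hts : t ∈ Ioo 0 s
      · rw [indicator_of_mem hts, indicator_of_mem (by exact ⟨hts.1, hts.2⟩)]
        rfl
      · rw [indicator_of_notMem hts, indicator_of_notMem
          (by simpa [hA, mem_Ioo] using hts)]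
    · rw [indicator_of_notMem (s := Ioi (0:ℝ)) (fun hc => hsp hc)]
      have hz : ∀ t : ℝ, A.indicator (Function.uncurry F) (t, s) = 0 :=
        fun t => indicator_of_notMem (fun hc => hsp (lt_trans hc.1 hc.2)) _
      rw [lintegral_congr hz, lintegral_zero]
  rw [key1, key2]
  exact lintegral_lintegral_swap ((hF.indicator hAm).aemeasurable)

end RieszAux

theorem riesz_potential_convolution {G : Type*} [Group G] [MeasurableSpace G]
    [MeasurableMul₂ G] [MeasurableInv G]
    (μ : Measure G) [SFinite μ]
    (h : ℝ × G → ENNReal) (hmeas : Measurable h)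
    (hCK : ∀ t τ : ℝ, 0 < t → 0 < τ → ∀ x : G,
      ∫⁻ y, h (t, y) * h (τ, y⁻¹ * x) ∂μ = h (t + τ, x))
    (a b : ℝ) (ha : 0 < a) (hb : 0 < b) (x : G) :
    ∫⁻ y, (∫⁻ t in Ioi (0 : ℝ), ENNReal.ofReal (t ^ (a - 1)) * h (t, y)) *
          (∫⁻ τ in Ioi (0 : ℝ), ENNReal.ofReal (τ ^ (b - 1)) * h (τ, y⁻¹ * x)) ∂μ
      = ENNReal.ofReal (Real.Gamma a * Real.Gamma b / Real.Gamma (a + b)) *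
          ∫⁻ s in Ioi (0 : ℝ), ENNReal.ofReal (s ^ (a + b - 1)) * h (s, x) := by
  have mu : Measurable fun t : ℝ => ENNReal.ofReal (t ^ (a - 1)) :=
    (measurable_id.pow measurable_const).ennreal_ofReal
  have mv : Measurable fun τ : ℝ => ENNReal.ofReal (τ ^ (b - 1)) :=
    (measurable_id.pow measurable_const).ennreal_ofReal
  -- Step A: pointwise in y, turn the product of integrals into a double integral
  have stepA : ∀ y : G,
      (∫⁻ t in Ioi (0:ℝ), ENNReal.ofReal (t ^ (a - 1)) * h (t, y)) *
      (∫⁻ τ in Ioi (0:ℝ), ENNReal.ofReal (τ ^ (b - 1)) * h (τ, y⁻¹ * x))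
      = ∫⁻ t in Ioi (0:ℝ), ∫⁻ τ in Ioi (0:ℝ),
          (ENNReal.ofReal (t ^ (a - 1)) * ENNReal.ofReal (τ ^ (b - 1)))
            * (h (t, y) * h (τ, y⁻¹ * x)) := by
    intro y
    have hm1 : Measurable fun t : ℝ => h (t, y) :=
      hmeas.comp (measurable_id.prodMk measurable_const)
    have hm2 : Measurable fun τ : ℝ => h (τ, y⁻¹ * x) :=
      hmeas.comp (measurable_id.prodMk measurable_const)
    rw [← lintegral_mul_const (f := fun t => ENNReal.ofReal (t ^ (a - 1)) * h (t, y)) _ (mu.mul hm1)]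
    refine lintegral_congr fun t => ?_
    rw [← lintegral_const_mul (f := fun τ => ENNReal.ofReal (τ ^ (b - 1)) * h (τ, y⁻¹ * x)) _ (mv.mul hm2)]
    refine lintegral_congr fun τ => ?_
    ring
  -- uncurried measurability for the big swap
  have mΦ : Measurable fun q : (G × ℝ) × ℝ =>
      (ENNReal.ofReal (q.1.2 ^ (a - 1)) * ENNReal.ofReal (q.2 ^ (b - 1)))
        * (h (q.1.2, q.1.1) * h (q.2, q.1.1⁻¹ * x)) :=
    ((mu.comp (measurable_snd.comp measurable_fst)).mul (mv.comp measurable_snd)).mul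
      ((hmeas.comp ((measurable_snd.comp measurable_fst).prodMk
          (measurable_fst.comp measurable_fst))).mul
        (hmeas.comp (measurable_snd.prodMk
          ((measurable_fst.comp measurable_fst).inv.mul_const x))))
  have mΨ : ∀ t : ℝ, Measurable fun p : G × ℝ =>
      (ENNReal.ofReal (t ^ (a - 1)) * ENNReal.ofReal (p.2 ^ (b - 1)))
        * (h (t, p.1) * h (p.2, p.1⁻¹ * x)) := fun t =>
    ((measurable_const.mul (mv.comp measurable_snd))).mul
      ((hmeas.comp (measurable_const.prodMk measurable_fst)).mul
        (hmeas.comp (measurable_snd.prodMk (measurable_fst.inv.mul_const x))))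
  -- Step B: Tonelli swaps and Chapman–Kolmogorov
  have stepB : ∫⁻ y, (∫⁻ t in Ioi (0:ℝ), ENNReal.ofReal (t ^ (a - 1)) * h (t, y)) *
        (∫⁻ τ in Ioi (0:ℝ), ENNReal.ofReal (τ ^ (b - 1)) * h (τ, y⁻¹ * x)) ∂μ
      = ∫⁻ t in Ioi (0:ℝ), ∫⁻ τ in Ioi (0:ℝ),
          (ENNReal.ofReal (t ^ (a - 1)) * ENNReal.ofReal (τ ^ (b - 1))) * h (t + τ, x) := by
    rw [lintegral_congr stepA]
    rw [lintegral_lintegral_swap (f := fun (y : G) (t : ℝ) => ∫⁻ τ in Ioi (0:ℝ),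
        (ENNReal.ofReal (t ^ (a - 1)) * ENNReal.ofReal (τ ^ (b - 1)))
          * (h (t, y) * h (τ, y⁻¹ * x)))
      (Measurable.lintegral_prod_right' mΦ).aemeasurable]
    refine setLIntegral_congr_fun measurableSet_Ioi
      (fun t ht => ?_)
    rw [lintegral_lintegral_swap (f := fun (y : G) (τ : ℝ) =>
        (ENNReal.ofReal (t ^ (a - 1)) * ENNReal.ofReal (τ ^ (b - 1)))
          * (h (t, y) * h (τ, y⁻¹ * x)))
      ((mΨ t).aemeasurable)]
    refine setLIntegral_congr_fun measurableSet_Ioi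
      (fun τ hτ => ?_)
    have hm3 : Measurable fun y : G => h (t, y) * h (τ, y⁻¹ * x) :=
      (hmeas.comp (measurable_const.prodMk measurable_id)).mul
        (hmeas.comp (measurable_const.prodMk (measurable_id.inv.mul_const x)))
    rw [lintegral_const_mul _ hm3, hCK t τ ht hτ x]
  rw [stepB]
  -- Step C: shift the inner integral
  have stepC : ∀ t : ℝ, t ∈ Ioi (0:ℝ) →
      ∫⁻ τ in Ioi (0:ℝ),
          (ENNReal.ofReal (t ^ (a - 1)) * ENNReal.ofReal (τ ^ (b - 1))) * h (t + τ, x)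
      = ∫⁻ s in Ioi t,
          (ENNReal.ofReal (t ^ (a - 1)) * ENNReal.ofReal ((s - t) ^ (b - 1))) * h (s, x) := by
    intro t _
    rw [← RieszAux.shift_lintegral
      (fun s => (ENNReal.ofReal (t ^ (a - 1)) * ENNReal.ofReal ((s - t) ^ (b - 1))) * h (s, x)) t]
    refine lintegral_congr fun τ => ?_
    rw [add_sub_cancel_right, add_comm t τ]
  rw [setLIntegral_congr_fun measurableSet_Ioi stepC]
  -- Step D: swap the triangular region
  have mF : Measurable (Function.uncurry fun t s : ℝ =>
      (ENNReal.ofReal (t ^ (a - 1)) * ENNReal.ofReal ((s - t) ^ (b - 1))) * h (s, x)) := by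
    refine Measurable.mul (Measurable.mul (f := fun p : ℝ × ℝ => ENNReal.ofReal (p.1 ^ (a - 1)))
      (g := fun p : ℝ × ℝ => ENNReal.ofReal ((p.2 - p.1) ^ (b - 1))) ?_ ?_) ?_
    · exact mu.comp measurable_fst
    · exact ((measurable_snd.sub measurable_fst).pow measurable_const).ennreal_ofReal
    · exact hmeas.comp (measurable_snd.prodMk measurable_const)
  rw [RieszAux.swap_triangle _ mF]
  -- Step E: evaluate the Beta integral
  have stepE : ∀ s : ℝ, s ∈ Ioi (0:ℝ) →
      ∫⁻ t in Ioo (0:ℝ) s,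
          (ENNReal.ofReal (t ^ (a - 1)) * ENNReal.ofReal ((s - t) ^ (b - 1))) * h (s, x)
      = ENNReal.ofReal (Real.Gamma a * Real.Gamma b / Real.Gamma (a + b))
          * (ENNReal.ofReal (s ^ (a + b - 1)) * h (s, x)) := by
    intro s hs
    rw [mem_Ioi] at hs
    have hcongr : ∫⁻ t in Ioo (0:ℝ) s,
        (ENNReal.ofReal (t ^ (a - 1)) * ENNReal.ofReal ((s - t) ^ (b - 1))) * h (s, x)
        = ∫⁻ t in Ioo (0:ℝ) s, ENNReal.ofReal (t ^ (a - 1) * (s - t) ^ (b - 1)) * h (s, x) := by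
      refine setLIntegral_congr_fun measurableSet_Ioo
        (fun t ht => ?_)
      rw [ENNReal.ofReal_mul (Real.rpow_nonneg ht.1.le _)]
    have mβ : Measurable fun t : ℝ => ENNReal.ofReal (t ^ (a - 1) * (s - t) ^ (b - 1)) :=
      ((measurable_id.pow measurable_const).mul
        ((measurable_const.sub measurable_id).pow measurable_const)).ennreal_ofReal
    rw [hcongr, lintegral_mul_const _ mβ, RieszAux.beta_lintegral ha hb hs, mul_assoc]
  rw [setLIntegral_congr_fun measurableSet_Ioi stepE]
  have mfin : Measurable fun s : ℝ => ENNReal.ofReal (s ^ (a + b - 1)) * h (s, x) :=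
    (measurable_id.pow measurable_const).ennreal_ofReal.mul
      (hmeas.comp (measurable_id.prodMk measurable_const))
  rw [lintegral_const_mul _ mfin]
end

section
/- Let n ≥ 1 and let γ : {1,…,n} → ℕ be a multi-index all of whose entries are even, with |γ| = ∑_i γ_i. Then ∫_{B} x_1^{|γ|} dx = ((∏_i (γ_i/2)!)/((|γ|/2)!)) · ((|γ|!)/(∏_i γ_i!)) · ∫_{B} ∏_{i=1}^n x_i^{γ_i} dx, where both integrals are Lebesgue integrals over the closed unit ball B of ℝⁿ. -/
open MeasureTheory Real Set

lemma gamma_half (m : ℕ) :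
    Real.Gamma (m + 1/2) = (Nat.factorial (2*m)) * Real.sqrt π / (4^m * Nat.factorial m) := by
  induction m with
  | zero => rw [show ((0:ℕ):ℝ) + 1/2 = 1/2 by norm_num, Real.Gamma_one_half_eq]; simp
  | succ m ih =>
    have h : ((m:ℝ)+1) + 1/2 = (m + 1/2) + 1 := by ring
    rw [Nat.cast_add, Nat.cast_one, h, Real.Gamma_add_one (by positivity), ih]
    have h1 : Nat.factorial (2*(m+1)) = (2*m+2)*(2*m+1)*Nat.factorial (2*m) := by
      rw [show 2*(m+1) = (2*m+1)+1 by ring, Nat.factorial_succ, Nat.factorial_succ]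
      ring
    rw [h1, Nat.factorial_succ]
    push_cast
    have : (Nat.factorial m : ℝ) ≠ 0 := Nat.cast_ne_zero.2 (Nat.factorial_ne_zero m)
    field_simp
    ring

lemma one_dim_moment (m : ℕ) :
    ∫ x : ℝ, x ^ (2*m) * Real.exp (-x^2)
      = (Nat.factorial (2*m)) * Real.sqrt π / (4^m * Nat.factorial m) := by
  have heven : ∀ x : ℝ, |x| ^ (2*m) * Real.exp (-|x|^2) = x ^ (2*m) * Real.exp (-x^2) := by
    intro x
    rw [pow_mul, pow_mul, sq_abs]
  calc ∫ x : ℝ, x ^ (2*m) * Real.exp (-x^2)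
      = ∫ x : ℝ, |x| ^ (2*m) * Real.exp (-|x|^2) := by
        congr 1; ext x; rw [heven]
    _ = 2 * ∫ x in Ioi (0:ℝ), x ^ (2*m) * Real.exp (-x^2) :=
        integral_comp_abs (f := fun x => x ^ (2*m) * Real.exp (-x^2))
    _ = 2 * ∫ x in Ioi (0:ℝ), x ^ ((2*m : ℕ) : ℝ) * Real.exp (-x^(2:ℝ)) := by
        rw [setIntegral_congr_fun measurableSet_Ioi (fun x hx => ?_)]
        rw [Real.rpow_natCast, Real.rpow_two]
    _ = 2 * ((1/2) * Real.Gamma ((2*m+1)/2)) := by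
        rw [integral_rpow_mul_exp_neg_rpow (by norm_num) (by exact lt_of_lt_of_le neg_one_lt_zero (by positivity))]
        norm_num
    _ = _ := by
        rw [show (2*(m:ℝ)+1)/2 = m + 1/2 by ring, gamma_half]
        ring

lemma gauss_prod (n : ℕ) (γ : Fin n → ℕ) :
    ∫ x : EuclideanSpace ℝ (Fin n), (∏ i, (x i)^(γ i)) * Real.exp (-‖x‖^2)
      = ∏ i, ∫ t : ℝ, t^(γ i) * Real.exp (-t^2) := by
  have h1 : ∀ x : EuclideanSpace ℝ (Fin n),
      (∏ i, (x i)^(γ i)) * Real.exp (-‖x‖^2)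
        = ∏ i, ((x i)^(γ i) * Real.exp (-(x i)^2)) := by
    intro x
    rw [EuclideanSpace.norm_eq, Real.sq_sqrt (by positivity), Finset.prod_mul_distrib]
    congr 1
    rw [← Real.exp_sum]
    congr 1
    rw [← Finset.sum_neg_distrib]
    congr 1; ext i; rw [Real.norm_eq_abs, sq_abs]
  simp_rw [h1]
  have key := MeasurePreserving.integral_comp' (f := (MeasurableEquiv.toLp 2 (Fin n → ℝ)).symm)
    (EuclideanSpace.volume_preserving_symm_measurableEquiv_toLp (Fin n))
    (fun y : Fin n → ℝ => ∏ i, ((y i)^(γ i) * Real.exp (-(y i)^2)))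
  rw [MeasureTheory.integral_fintype_prod_volume_eq_prod
    (fun i (t : ℝ) => t^(γ i) * Real.exp (-t^2))] at key
  exact key

lemma volumeIoiPow_integral (k : ℕ) (φ : ℝ → ℝ) :
    ∫ r : Ioi (0:ℝ), φ r ∂(Measure.volumeIoiPow k) = ∫ r in Ioi (0:ℝ), r^k * φ r := by
  simp only [Measure.volumeIoiPow, ENNReal.ofReal]
  rw [integral_withDensity_eq_integral_smul
    ((measurable_subtype_coe.pow_const _).real_toNNReal) (fun r : Ioi (0:ℝ) => φ r),
    integral_subtype_comap measurableSet_Ioi fun a : ℝ ↦ Real.toNNReal (a ^ k) • φ a,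
    setIntegral_congr_fun measurableSet_Ioi fun x hx ↦ ?_]
  rw [NNReal.smul_def, Real.coe_toNNReal _ (pow_nonneg hx.out.le _), smul_eq_mul]

open Metric in
lemma polar_decomp (n : ℕ) (hn : 0 < n) (f : EuclideanSpace ℝ (Fin n) → ℝ)
    (hf : Continuous f) (d : ℕ)
    (hom : ∀ (r : ℝ), 0 < r → ∀ x, f (r • x) = r ^ d * f x)
    (h : ℝ → ℝ) (hh : Measurable h) :
    ∫ x : EuclideanSpace ℝ (Fin n), f x * h ‖x‖
      = (∫ ω : Metric.sphere (0 : EuclideanSpace ℝ (Fin n)) 1, f ω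
          ∂((volume : Measure (EuclideanSpace ℝ (Fin n))).toSphere))
        * ∫ r in Ioi (0:ℝ), r ^ (n - 1 + d) * h r := by
  have hdim : Module.finrank ℝ (EuclideanSpace ℝ (Fin n)) = n := finrank_euclideanSpace_fin
  haveI : Nontrivial (EuclideanSpace ℝ (Fin n)) :=
    Module.nontrivial_of_finrank_pos (R := ℝ) (by rw [hdim]; exact hn)
  set μ : Measure (EuclideanSpace ℝ (Fin n)) := volume with hμ
  set g : Metric.sphere (0:EuclideanSpace ℝ (Fin n)) 1 × Ioi (0:ℝ) → ℝ :=
    fun p => f p.1 * ((p.2 : ℝ) ^ d * h p.2) with hg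
  calc ∫ x : EuclideanSpace ℝ (Fin n), f x * h ‖x‖ ∂μ
      = ∫ x : ({0}ᶜ : Set (EuclideanSpace ℝ (Fin n))), f x * h ‖(x:EuclideanSpace ℝ (Fin n))‖
          ∂(μ.comap (↑)) := by
        rw [integral_subtype_comap (measurableSet_singleton (0:EuclideanSpace ℝ (Fin n))).compl
          (fun x => f x * h ‖x‖), restrict_compl_singleton]
    _ = ∫ x : ({0}ᶜ : Set (EuclideanSpace ℝ (Fin n))),
          g (homeomorphUnitSphereProd (EuclideanSpace ℝ (Fin n)) x) ∂(μ.comap (↑)) := by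
        refine integral_congr_ae (Filter.Eventually.of_forall fun x => ?_)
        have hx : (x : EuclideanSpace ℝ (Fin n)) ≠ 0 := x.2
        have hxn : (0:ℝ) < ‖(x:EuclideanSpace ℝ (Fin n))‖ := norm_pos_iff.2 hx
        simp only [hg, homeomorphUnitSphereProd_apply_fst_coe,
          homeomorphUnitSphereProd_apply_snd_coe]
        rw [← mul_assoc]
        congr 1
        rw [mul_comm, ← hom _ hxn, smul_inv_smul₀ hxn.ne']
    _ = ∫ p, g p ∂(μ.toSphere.prod (Measure.volumeIoiPow (Module.finrank ℝ (EuclideanSpace ℝ (Fin n)) - 1))) :=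
        μ.measurePreserving_homeomorphUnitSphereProd.integral_comp
          (Homeomorph.measurableEmbedding _) g
    _ = (∫ ω : Metric.sphere (0:EuclideanSpace ℝ (Fin n)) 1, f ω ∂μ.toSphere)
          * ∫ r : Ioi (0:ℝ), ((r:ℝ) ^ d * h r) ∂(Measure.volumeIoiPow (n-1)) := by
        rw [hdim]
        exact integral_prod_mul (fun ω : Metric.sphere (0:EuclideanSpace ℝ (Fin n)) 1 => f ω)
          (fun r : Ioi (0:ℝ) => (r:ℝ) ^ d * h r)
    _ = _ := by
        rw [volumeIoiPow_integral (n-1) (fun t => t ^ d * h t)]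
        congr 1
        refine setIntegral_congr_fun measurableSet_Ioi fun x hx => ?_
        rw [← mul_assoc, ← pow_add]

lemma radial_indicator (k : ℕ) :
    ∫ r in Ioi (0:ℝ), r ^ k * (Iic (1:ℝ)).indicator (fun _ => (1:ℝ)) r = ((k:ℝ)+1)⁻¹ := by
  have h1 : ∀ r : ℝ, r ^ k * (Iic (1:ℝ)).indicator (fun _ => (1:ℝ)) r
      = (Iic (1:ℝ)).indicator (fun t => t ^ k) r := by
    intro r
    by_cases hr : r ∈ Iic (1:ℝ)
    · rw [indicator_of_mem hr, indicator_of_mem hr, mul_one]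
    · rw [indicator_of_notMem hr, indicator_of_notMem hr, mul_zero]
  simp_rw [h1]
  rw [setIntegral_indicator measurableSet_Iic, show Ioi (0:ℝ) ∩ Iic 1 = Ioc 0 1 from rfl,
    ← intervalIntegral.integral_of_le zero_le_one, integral_pow]
  norm_num

lemma radial_gauss (k : ℕ) :
    ∫ r in Ioi (0:ℝ), r ^ k * Real.exp (-r^2) = Real.Gamma (((k:ℝ)+1)/2) / 2 := by
  rw [setIntegral_congr_fun measurableSet_Ioi
    (fun x (hx : x ∈ Ioi (0:ℝ)) => by
      rw [← Real.rpow_natCast x k, ← Real.rpow_two] :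
      ∀ x ∈ Ioi (0:ℝ), x ^ k * Real.exp (-x^2) = x ^ ((k:ℕ):ℝ) * Real.exp (-x ^ (2:ℝ)))]
  rw [integral_rpow_mul_exp_neg_rpow (by norm_num)
    (by exact lt_of_lt_of_le neg_one_lt_zero (by positivity))]
  ring

lemma monomial_homog (n : ℕ) (γ : Fin n → ℕ) (r : ℝ) (hr : 0 < r)
    (x : EuclideanSpace ℝ (Fin n)) :
    ∏ i, ((r • x) i) ^ (γ i) = r ^ (∑ i, γ i) * ∏ i, (x i) ^ (γ i) := by
  have h : ∀ i, (r • x) i = r * x i := fun i => rfl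
  simp_rw [h, mul_pow, Finset.prod_mul_distrib, Finset.prod_pow_eq_pow_sum]

lemma monomial_cont (n : ℕ) (γ : Fin n → ℕ) :
    Continuous (fun x : EuclideanSpace ℝ (Fin n) => ∏ i, (x i) ^ (γ i)) := by
  fun_prop

lemma ball_gauss (n : ℕ) (hn : 0 < n) (γ : Fin n → ℕ) :
    (∫ x in Metric.closedBall (0 : EuclideanSpace ℝ (Fin n)) 1, ∏ i, (x i)^(γ i))
        * (Real.Gamma (((↑(n - 1 + ∑ i, γ i):ℝ)+1)/2) / 2)
      = (∫ x : EuclideanSpace ℝ (Fin n), (∏ i, (x i)^(γ i)) * Real.exp (-‖x‖^2))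
        * ((↑(n - 1 + ∑ i, γ i):ℝ)+1)⁻¹ := by
  have hb : ∫ x in Metric.closedBall (0 : EuclideanSpace ℝ (Fin n)) 1, ∏ i, (x i)^(γ i)
      = ∫ x : EuclideanSpace ℝ (Fin n),
          (∏ i, (x i)^(γ i)) * (Iic (1:ℝ)).indicator (fun _ => (1:ℝ)) ‖x‖ := by
    rw [← integral_indicator (measurableSet_closedBall)]
    congr 1
    ext x
    by_cases hx : ‖x‖ ≤ 1
    · rw [indicator_of_mem (by simpa [Metric.mem_closedBall, dist_zero_right] using hx),
        indicator_of_mem (by exact hx), mul_one]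
    · rw [indicator_of_notMem (by simpa [Metric.mem_closedBall, dist_zero_right] using hx),
        indicator_of_notMem (by exact hx), mul_zero]
  have hg : ∀ x : EuclideanSpace ℝ (Fin n),
      (∏ i, (x i)^(γ i)) * Real.exp (-‖x‖^2)
        = (∏ i, (x i)^(γ i)) * (fun r : ℝ => Real.exp (-r^2)) ‖x‖ := fun x => rfl
  have h1 := polar_decomp n hn (fun x => ∏ i, (x i)^(γ i)) (monomial_cont n γ)
    (∑ i, γ i) (fun r hr x => monomial_homog n γ r hr x)
    ((Iic (1:ℝ)).indicator (fun _ => (1:ℝ)))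
    (measurable_const.indicator measurableSet_Iic)
  have h2 := polar_decomp n hn (fun x => ∏ i, (x i)^(γ i)) (monomial_cont n γ)
    (∑ i, γ i) (fun r hr x => monomial_homog n γ r hr x)
    (fun r : ℝ => Real.exp (-r^2)) (by fun_prop)
  have h2' : (∫ x : EuclideanSpace ℝ (Fin n), (∏ i, (x i)^(γ i)) * Real.exp (-‖x‖^2))
      = (∫ ω : Metric.sphere (0 : EuclideanSpace ℝ (Fin n)) 1, ∏ i, ((ω:EuclideanSpace ℝ (Fin n)) i)^(γ i)
          ∂((volume : Measure (EuclideanSpace ℝ (Fin n))).toSphere))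
        * ∫ r in Ioi (0:ℝ), r ^ (n - 1 + ∑ i, γ i) * Real.exp (-r^2) := h2
  rw [hb, h1, h2', radial_indicator, radial_gauss]
  ring


theorem even_moment_first_coordinate (n : ℕ) (hn : 0 < n) (γ : Fin n → ℕ)
    (hγ : ∀ i, Even (γ i)) :
    ∫ x in Metric.closedBall (0 : EuclideanSpace ℝ (Fin n)) 1, (x ⟨0, hn⟩) ^ (∑ i, γ i)
      = ((∏ i, (Nat.factorial (γ i / 2) : ℝ)) / (Nat.factorial ((∑ i, γ i) / 2) : ℝ)) *
        ((Nat.factorial (∑ i, γ i) : ℝ) / ∏ i, (Nat.factorial (γ i) : ℝ)) *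
        ∫ x in Metric.closedBall (0 : EuclideanSpace ℝ (Fin n)) 1, ∏ i, (x i) ^ (γ i) := by
  classical
  set i0 : Fin n := ⟨0, hn⟩ with hi0
  have hγ2 : ∀ i, γ i = 2 * (γ i / 2) := fun i => (Nat.two_mul_div_two_of_even (hγ i)).symm
  set D := ∑ i, γ i with hD
  set M := ∑ i, γ i / 2 with hM
  have hDM : D = 2 * M := by
    rw [hD, hM, Finset.mul_sum]
    exact Finset.sum_congr rfl fun i _ => hγ2 i
  have hD2 : D / 2 = M := by rw [hDM]; omega
  set δ : Fin n → ℕ := fun i => if i = i0 then D else 0 with hδ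
  have hδsum : ∑ i, δ i = D := by simp [hδ]
  -- bridging lemmas
  have hB2 := ball_gauss n hn γ
  have hB1 := ball_gauss n hn δ
  rw [hδsum] at hB1
  rw [← hD] at hB2
  -- replace the δ-monomial by the first-coordinate power
  have hmono : ∀ x : EuclideanSpace ℝ (Fin n), ∏ i, (x i) ^ (δ i) = (x i0) ^ D := by
    intro x
    simp only [hδ, pow_ite, pow_zero, Finset.prod_ite_eq', Finset.mem_univ, if_true]
  have hmb : ∫ x in Metric.closedBall (0 : EuclideanSpace ℝ (Fin n)) 1, ∏ i, (x i) ^ (δ i)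
      = ∫ x in Metric.closedBall (0 : EuclideanSpace ℝ (Fin n)) 1, (x i0) ^ D :=
    setIntegral_congr_fun measurableSet_closedBall fun x _ => hmono x
  rw [hmb] at hB1
  -- Gaussian evaluations
  have hG2 : (∫ x : EuclideanSpace ℝ (Fin n), (∏ i, (x i) ^ (γ i)) * Real.exp (-‖x‖^2))
      = ∏ i, ((Nat.factorial (γ i) : ℝ) * Real.sqrt π / (4 ^ (γ i / 2) * (Nat.factorial (γ i / 2) : ℝ))) := by
    rw [gauss_prod]
    refine Finset.prod_congr rfl fun i _ => ?_
    conv_lhs => rw [hγ2 i]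
    rw [one_dim_moment (γ i / 2), ← hγ2 i]
  have hG1 : (∫ x : EuclideanSpace ℝ (Fin n), (∏ i, (x i) ^ (δ i)) * Real.exp (-‖x‖^2))
      = ∏ i, ((Nat.factorial (2 * (if i = i0 then M else 0)) : ℝ) * Real.sqrt π
          / (4 ^ (if i = i0 then M else 0) * (Nat.factorial (if i = i0 then M else 0) : ℝ))) := by
    rw [gauss_prod]
    refine Finset.prod_congr rfl fun i _ => ?_
    have hδi : δ i = 2 * (if i = i0 then M else 0) := by
      by_cases h : i = i0 <;> simp [hδ, h, hDM]
    conv_lhs => rw [hδi]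
    rw [one_dim_moment]
  rw [hG1] at hB1
  rw [hG2] at hB2
  -- evaluate the δ-product
  have hP1 : (∏ i, ((Nat.factorial (2 * (if i = i0 then M else 0)) : ℝ) * Real.sqrt π
          / (4 ^ (if i = i0 then M else 0) * (Nat.factorial (if i = i0 then M else 0) : ℝ))))
      = (Nat.factorial (2*M) : ℝ) * Real.sqrt π ^ n / (4 ^ M * (Nat.factorial M : ℝ)) := by
    rw [Finset.prod_div_distrib, Finset.prod_mul_distrib, Finset.prod_mul_distrib,
      Finset.prod_const, Finset.card_univ, Fintype.card_fin]
    rw [Finset.prod_eq_single i0 (fun b _ hb => by simp [hb]) (by simp),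
      Finset.prod_eq_single i0 (fun b _ hb => by simp [hb]) (by simp),
      Finset.prod_eq_single i0 (fun b _ hb => by simp [hb]) (by simp)]
    simp
  -- evaluate the γ-product
  have hP2 : (∏ i, ((Nat.factorial (γ i) : ℝ) * Real.sqrt π / (4 ^ (γ i / 2) * (Nat.factorial (γ i / 2) : ℝ))))
      = (∏ i, (Nat.factorial (γ i) : ℝ)) * Real.sqrt π ^ n
        / (4 ^ M * ∏ i, (Nat.factorial (γ i / 2) : ℝ)) := by
    rw [Finset.prod_div_distrib, Finset.prod_mul_distrib, Finset.prod_mul_distrib,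
      Finset.prod_const, Finset.card_univ, Fintype.card_fin, Finset.prod_pow_eq_pow_sum, ← hM]
  rw [hP1] at hB1
  rw [hP2] at hB2
  rw [← hDM] at hB1
  have hc : (0:ℝ) < Real.Gamma ((((n - 1 + D : ℕ)) + 1 : ℝ) / 2) / 2 := by
    have := Real.Gamma_pos_of_pos (show (0:ℝ) < (((n - 1 + D : ℕ)) + 1 : ℝ) / 2 by positivity)
    linarith
  have f1 : (0:ℝ) < ∏ i, (Nat.factorial (γ i) : ℝ) :=
    Finset.prod_pos fun i _ => by positivity
  have f2 : (0:ℝ) < ∏ i, (Nat.factorial (γ i / 2) : ℝ) :=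
    Finset.prod_pos fun i _ => by positivity
  have f3 : (0:ℝ) < (Nat.factorial M : ℝ) := by positivity
  have f4 : (0:ℝ) < Real.sqrt π := Real.sqrt_pos.2 Real.pi_pos
  have f5 : (0:ℝ) < ((n - 1 + D : ℕ) : ℝ) + 1 := by positivity
  rw [hD2]
  refine mul_right_cancel₀ (ne_of_gt hc) ?_
  have hKey : ((Nat.factorial D : ℝ) * Real.sqrt π ^ n / (4 ^ M * (Nat.factorial M : ℝ)))
      = ((∏ i, (Nat.factorial (γ i / 2) : ℝ)) / (Nat.factorial M : ℝ)
          * ((Nat.factorial D : ℝ) / ∏ i, (Nat.factorial (γ i) : ℝ)))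
        * ((∏ i, (Nat.factorial (γ i) : ℝ)) * Real.sqrt π ^ n
            / (4 ^ M * ∏ i, (Nat.factorial (γ i / 2) : ℝ))) := by
    field_simp
  rw [hB1, mul_assoc, hB2, hKey]
  ring
end
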